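/- There exists a stationary transfer scheme τ with 0 < τ(i) < s(i) for every state i such that for every state i: log(s(i) − τ(i)) + β·∑_r π(r)·log(1 − s(r) + τ(r)) > log(s(i)) + β·∑_r π(r)·log(1 − s(r)). That is, there is a nonautarkic stationary sustainable intergenerational insurance rule giving every generation a strict lifetime-utility gain over autarky. -/

import Mathlib

open Real

/-- Under the sustainability assumption, there exists a nonautarkic stationary
sustainable intergenerational insurance rule: a stationary transfer scheme `τ` with
`0 < τ i < s i` in every state giving every generation a strict lifetime-utility
gain over autarky. -/
theorem stmt_0 (I : ℕ) (hI : 2 ≤ I) (p s : Fin I → ℝ)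
    (hp : ∀ i, 0 < p i) (hpsum : ∑ i, p i = 1)
    (hs : ∀ i, s i ∈ Set.Ioo (0 : ℝ) 1)
    (β : ℝ) (hβ : β ∈ Set.Ioc (0 : ℝ) 1)
    (hsus : 1 < β * ∑ i, p i * (s i / (1 - s i))) :
    ∃ τ : Fin I → ℝ, (∀ i, 0 < τ i ∧ τ i < s i) ∧
      ∀ i, log (s i) + β * ∑ r, p r * log (1 - s r) <
        log (s i - τ i) + β * ∑ r, p r * log (1 - s r + τ r) := by
  set g : ℝ → ℝ := fun ε => Real.log (1 - ε) + β * ∑ r, p r * Real.log (1 - s r + ε * s r)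
    with hg_def
  have hs1 : ∀ r, (0:ℝ) < 1 - s r := fun r => by have := (hs r).2; linarith
  -- derivative of g at 0
  have h1 : HasDerivAt (fun ε : ℝ => Real.log (1 - ε)) (-1) 0 := by
    have h := ((hasDerivAt_id (0:ℝ)).const_sub 1).log (by norm_num)
    simpa using h
  have h2 : ∀ r, HasDerivAt (fun ε : ℝ => Real.log (1 - s r + ε * s r)) (s r / (1 - s r)) 0 := by
    intro r
    have h := (((hasDerivAt_id (0:ℝ)).mul_const (s r)).const_add (1 - s r)).log
      (by simpa using (hs1 r).ne')
    simpa using h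
  have hsum : HasDerivAt (fun ε : ℝ => ∑ r, p r * Real.log (1 - s r + ε * s r))
      (∑ r, p r * (s r / (1 - s r))) 0 := by
    have := HasDerivAt.fun_sum (u := Finset.univ)
      (fun r _ => (h2 r).const_mul (p r))
    simpa using this
  set D : ℝ := -1 + β * ∑ r, p r * (s r / (1 - s r)) with hD_def
  have hg : HasDerivAt g D 0 := by
    have := h1.fun_add (hsum.const_mul β)
    simpa [hg_def, hD_def, add_comm] using this
  have hDpos : 0 < D := by simp [hD_def]; linarith
  -- slope argument
  have hslope := hasDerivAt_iff_tendsto_slope.mp hg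
  have hev : ∀ᶠ x in nhdsWithin (0:ℝ) {0}ᶜ, 0 < slope g 0 x :=
    hslope.eventually (eventually_gt_nhds hDpos)
  have hle : nhdsWithin (0:ℝ) (Set.Ioi 0) ≤ nhdsWithin (0:ℝ) {0}ᶜ :=
    nhdsWithin_mono 0 (fun x hx => ne_of_gt hx)
  have hev' : ∀ᶠ x in nhdsWithin (0:ℝ) (Set.Ioi 0), 0 < slope g 0 x := hev.filter_mono hle
  have hIoo : Set.Ioo (0:ℝ) 1 ∈ nhdsWithin (0:ℝ) (Set.Ioi 0) :=
    Ioo_mem_nhdsGT (by norm_num)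
  obtain ⟨ε, hεslope, hε0, hε1⟩ := (hev'.and (Filter.eventually_of_mem hIoo (fun x hx => hx))).exists
  -- from slope > 0 and ε > 0 deduce g 0 < g ε
  have hgain : g 0 < g ε := by
    have : slope g 0 ε = (g ε - g 0) / ε := by
      simp [slope, vsub_eq_sub, div_eq_inv_mul]
    rw [this] at hεslope
    have := (div_pos_iff.mp hεslope)
    rcases this with ⟨h, _⟩ | ⟨_, h⟩
    · linarith
    · linarith
  refine ⟨fun i => ε * s i, fun i => ⟨mul_pos hε0 (hs i).1, ?_⟩, ?_⟩
  · simpa using mul_lt_of_lt_one_left (hs i).1 hε1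
  · intro i
    have hsi := (hs i).1
    have key : Real.log (s i - ε * s i)
        = Real.log (s i) + Real.log (1 - ε) := by
      rw [← Real.log_mul (ne_of_gt hsi) (by linarith)]
      ring_nf
    have hg0 : g 0 = β * ∑ r, p r * Real.log (1 - s r) := by
      simp [hg_def]
    have hgε : g ε = Real.log (1 - ε) + β * ∑ r, p r * Real.log (1 - s r + ε * s r) := rfl
    rw [key]
    have : log (s i) + g 0 < log (s i) + g ε := by linarith
    rw [hg0, hgε] at this
    linarith
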